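/- Define φ : ℝ → ℝ by φ(λ) = λ² − 1 − (1/2)·|λ² − 1| + (1/4)·(1 − (λ² − 1)²). For ξ ∈ [0,1], let Φ(ξ) = inf over λ ∈ [0,2] of ((ξ/2)·(λ − 1)² + (1 − ξ)·φ(λ)). Then the supremum of Φ(ξ) over ξ ∈ [0,1] lies strictly between 0.0034 and 0.0035. -/
import Mathlib

private lemma quartic_low (l : ℝ) (h0 : 0 ≤ l) (h2 : l ≤ 2) :
    (0.00348 : ℝ) ≤ (972/1000)/2*(l-1)^2
      + (1-972/1000)*(l^2-1 - (1/2)*|l^2-1| + (1/4)*(1-(l^2-1)^2)) := by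
  rcases le_or_gt l 1 with h1 | h1
  · rw [abs_of_nonpos (by nlinarith)]
    nlinarith [sq_nonneg (l - 0.91645), sq_nonneg (l^2 - 0.84), sq_nonneg ((l-0.91645)*(l+1)),
      sq_nonneg (l-1), sq_nonneg l, mul_nonneg h0 (sub_nonneg.2 h1)]
  · rw [abs_of_nonneg (by nlinarith)]
    nlinarith [sq_nonneg (l-1), sq_nonneg (l-2),
      mul_nonneg (sub_nonneg.2 h1.le) (sub_nonneg.2 h2), sq_nonneg (l^2-1)]

private lemma f_below (ξ l : ℝ) (hξ0 : 0 ≤ ξ) (hξ1 : ξ ≤ 1) (h0 : 0 ≤ l) (h2 : l ≤ 2) :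
    (-3 : ℝ) ≤ ξ/2*(l-1)^2 + (1-ξ)*(l^2-1 - (1/2)*|l^2-1| + (1/4)*(1-(l^2-1)^2)) := by
  rcases le_or_gt l 1 with h1 | h1
  · rw [abs_of_nonpos (by nlinarith)]
    have hE : (-3/2 : ℝ) ≤ l^2-1 - (1/2)*(-(l^2-1)) + (1/4)*(1-(l^2-1)^2) := by
      nlinarith [sq_nonneg l, mul_nonneg (sq_nonneg l) (by nlinarith : (0:ℝ) ≤ 2 - l^2)]
    have hm := mul_le_mul_of_nonneg_left hE (by linarith : (0:ℝ) ≤ 1 - ξ)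
    nlinarith [mul_nonneg hξ0 (sq_nonneg (l-1))]
  · rw [abs_of_nonneg (by nlinarith)]
    have hE : (-2 : ℝ) ≤ l^2-1 - (1/2)*(l^2-1) + (1/4)*(1-(l^2-1)^2) := by
      nlinarith [mul_nonneg (by nlinarith : (0:ℝ) ≤ l^2-1) (by nlinarith : (0:ℝ) ≤ 3-(l^2-1))]
    have hm := mul_le_mul_of_nonneg_left hE (by linarith : (0:ℝ) ≤ 1 - ξ)
    nlinarith [mul_nonneg hξ0 (sq_nonneg (l-1))]

/-- The corrected exponent of the Appendix: with
`φ(λ) = λ² − 1 − |λ² − 1|/2 + (1 − (λ² − 1)²)/4` and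
`Φ(ξ) = inf_{λ ∈ [0,2]} ((ξ/2)(λ−1)² + (1−ξ)φ(λ))`, the supremum of `Φ` over `[0,1]` lies
strictly between `0.0034` and `0.0035`. -/
theorem stmt_3 :
    let φ : ℝ → ℝ := fun l =>
      l ^ 2 - 1 - (1 / 2) * |l ^ 2 - 1| + (1 / 4) * (1 - (l ^ 2 - 1) ^ 2)
    let Φ : ℝ → ℝ := fun ξ =>
      sInf ((fun l : ℝ => (ξ / 2) * (l - 1) ^ 2 + (1 - ξ) * φ l) '' Set.Icc (0 : ℝ) 2)
    0.0034 < sSup (Φ '' Set.Icc (0 : ℝ) 1) ∧ sSup (Φ '' Set.Icc (0 : ℝ) 1) < 0.0035 := by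
  intro φ Φ
  -- basic facts about the inner sets
  have hbdd : ∀ ξ ∈ Set.Icc (0:ℝ) 1,
      BddBelow ((fun l : ℝ => (ξ / 2) * (l - 1) ^ 2 + (1 - ξ) * φ l) '' Set.Icc (0 : ℝ) 2) := by
    intro ξ hξ
    refine ⟨-3, ?_⟩
    rintro x ⟨l, hl, rfl⟩
    have := f_below ξ l hξ.1 hξ.2 hl.1 hl.2
    simp only [φ]
    linarith [this]
  -- upper bound: Φ ξ ≤ 0.00349 for all ξ ∈ [0,1]
  have hup : ∀ ξ ∈ Set.Icc (0:ℝ) 1, Φ ξ ≤ 0.00349 := by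
    intro ξ hξ
    rcases le_or_gt ξ (97/100) with hc | hc
    · have hmem : (9164/10000 : ℝ) ∈ Set.Icc (0:ℝ) 2 := by norm_num
      have hle : Φ ξ ≤ (ξ / 2) * ((9164/10000 : ℝ) - 1) ^ 2 + (1 - ξ) * φ (9164/10000) :=
        csInf_le (hbdd ξ hξ) ⟨_, hmem, rfl⟩
      have hφ : φ (9164/10000 : ℝ) =
          (9164/10000:ℝ)^2 - 1 - (1/2)*(-((9164/10000:ℝ)^2-1))
            + (1/4)*(1-((9164/10000:ℝ)^2-1)^2) := by
        simp only [φ]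
        rw [abs_of_nonpos (by norm_num)]
      rw [hφ] at hle
      nlinarith [hle, hξ.1]
    · have hmem : (9165/10000 : ℝ) ∈ Set.Icc (0:ℝ) 2 := by norm_num
      have hle : Φ ξ ≤ (ξ / 2) * ((9165/10000 : ℝ) - 1) ^ 2 + (1 - ξ) * φ (9165/10000) :=
        csInf_le (hbdd ξ hξ) ⟨_, hmem, rfl⟩
      have hφ : φ (9165/10000 : ℝ) =
          (9165/10000:ℝ)^2 - 1 - (1/2)*(-((9165/10000:ℝ)^2-1))
            + (1/4)*(1-((9165/10000:ℝ)^2-1)^2) := by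
        simp only [φ]
        rw [abs_of_nonpos (by norm_num)]
      rw [hφ] at hle
      nlinarith [hle, hξ.2, hc]
  have hSne : (Φ '' Set.Icc (0:ℝ) 1).Nonempty := ⟨Φ 0, 0, by norm_num, rfl⟩
  constructor
  · -- lower bound: Φ (972/1000) ≥ 0.00348 > 0.0034
    have hmemξ : (972/1000 : ℝ) ∈ Set.Icc (0:ℝ) 1 := by norm_num
    have hΦ : (0.00348 : ℝ) ≤ Φ (972/1000) := by
      apply le_csInf ((Set.nonempty_Icc.mpr (by norm_num : (0:ℝ) ≤ 2)).image _)
      rintro x ⟨l, hl, rfl⟩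
      have := quartic_low l hl.1 hl.2
      simp only [φ]
      linarith [this]
    have hBdd : BddAbove (Φ '' Set.Icc (0:ℝ) 1) := by
      refine ⟨0.00349, ?_⟩
      rintro x ⟨ξ, hξ, rfl⟩
      exact hup ξ hξ
    have hle : Φ (972/1000) ≤ sSup (Φ '' Set.Icc (0:ℝ) 1) :=
      le_csSup hBdd ⟨_, hmemξ, rfl⟩
    linarith
  · have : sSup (Φ '' Set.Icc (0:ℝ) 1) ≤ 0.00349 := by
      apply csSup_le hSne
      rintro x ⟨ξ, hξ, rfl⟩
      exact hup ξ hξ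
    linarith
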